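/- If 𝔠 is a formal power series over ℚ satisfying 𝔠 = exp(t·𝔠), and 𝔡 := 𝔠 - (1/2)·t·𝔠², then the derivative of t·𝔡 equals 𝔠, i.e. (t𝔡)' = 𝔠. -/

import Mathlib

/-!
STATEMENT 15: If `𝔠 ∈ ℚ⟦t⟧` satisfies `𝔠 = exp(t·𝔠)` and
`𝔡 := 𝔠 - (1/2)·t·𝔠²`, then `(t𝔡)' = 𝔠`, where `'` is formal differentiation.
-/

open PowerSeries

/-- The formal exponential `exp f = ∑_m f^m / m!`, defined coefficientwise
(valid for `f` with zero constant term). -/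
noncomputable def psExp (f : PowerSeries ℚ) : PowerSeries ℚ :=
  PowerSeries.mk fun n =>
    ∑ m ∈ Finset.range (n + 1),
      ((m.factorial : ℚ)⁻¹) * PowerSeries.coeff (R := ℚ) n (f ^ m)

lemma psExp_deriv (f : PowerSeries ℚ) (hf : PowerSeries.constantCoeff f = 0) :
    PowerSeries.derivative ℚ (psExp f) = psExp f * PowerSeries.derivative ℚ f := by
  have hvan : ∀ i m : ℕ, i < m → PowerSeries.coeff (R := ℚ) i (f ^ m) = 0 := by
    intro i m him
    have hdvd : (X : PowerSeries ℚ) ^ m ∣ f ^ m :=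
      pow_dvd_pow_of_dvd (PowerSeries.X_dvd_iff.mpr hf) m
    exact PowerSeries.X_pow_dvd_iff.mp hdvd i him
  ext n
  rw [PowerSeries.coeff_derivative]
  -- LHS
  have hL : (PowerSeries.coeff (R := ℚ) (n+1) (psExp f)) * (n+1) =
      ∑ m ∈ Finset.range (n + 1),
        ((m.factorial : ℚ)⁻¹) * PowerSeries.coeff (R := ℚ) n (f ^ m * PowerSeries.derivative ℚ f) := by
    rw [psExp, PowerSeries.coeff_mk, Finset.sum_mul, Finset.sum_range_succ']
    simp only [pow_zero, Nat.factorial_zero, Nat.cast_one, inv_one, one_mul]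
    rw [PowerSeries.coeff_one]
    simp only [Nat.add_eq_zero, one_ne_zero, and_false, if_false, zero_mul, add_zero]
    apply Finset.sum_congr rfl
    intro m _
    have hder : (PowerSeries.coeff (R := ℚ) (n+1) (f ^ (m+1))) * (n+1) =
        PowerSeries.coeff (R := ℚ) n (PowerSeries.derivative ℚ (f ^ (m+1))) := by
      rw [PowerSeries.coeff_derivative]
    have hpow : PowerSeries.derivative ℚ (f ^ (m+1)) =
        (m+1 : ℕ) • (f ^ m * PowerSeries.derivative ℚ f) := by
      have := Derivation.leibniz_pow (PowerSeries.derivative ℚ) f (m+1)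
      simp only [Nat.add_sub_cancel, smul_mul_assoc] at this
      exact this
    rw [mul_assoc, hder, hpow, map_nsmul]
    rw [Nat.factorial_succ]
    push_cast
    field_simp
    ring
  rw [hL, PowerSeries.coeff_mul]
  -- RHS
  have hR : ∀ p ∈ Finset.HasAntidiagonal.antidiagonal n,
      PowerSeries.coeff (R := ℚ) p.1 (psExp f) * PowerSeries.coeff (R := ℚ) p.2 (PowerSeries.derivative ℚ f) =
      ∑ m ∈ Finset.range (n + 1),
        ((m.factorial : ℚ)⁻¹) * (PowerSeries.coeff (R := ℚ) p.1 (f ^ m) *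
          PowerSeries.coeff (R := ℚ) p.2 (PowerSeries.derivative ℚ f)) := by
    intro p hp
    have hple : p.1 ≤ n := by
      have := Finset.HasAntidiagonal.antidiagonal.fst_le hp
      omega
    rw [psExp, PowerSeries.coeff_mk, Finset.sum_mul]
    rw [Finset.sum_subset (Finset.range_subset_range.mpr (by omega : p.1 + 1 ≤ n + 1))]
    · apply Finset.sum_congr rfl; intro m _; ring
    · intro m _ hm
      have : p.1 < m := by simp [Finset.mem_range] at hm ⊢; omega
      rw [hvan p.1 m this]; ring
  rw [Finset.sum_congr rfl hR, Finset.sum_comm]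
  apply Finset.sum_congr rfl
  intro m _
  rw [← Finset.mul_sum, PowerSeries.coeff_mul]

theorem deriv_X_mul_d_eq_c (c d : PowerSeries ℚ)
    (hc : c = psExp (PowerSeries.X * c))
    (hd : d = c - PowerSeries.C (R := ℚ) (1 / 2) * (PowerSeries.X * c ^ 2)) :
    PowerSeries.derivative ℚ (PowerSeries.X * d) = c := by
  have hrel : PowerSeries.derivative ℚ c =
      c * PowerSeries.derivative ℚ (PowerSeries.X * c) := by
    conv_lhs => rw [hc]
    rw [psExp_deriv _ (by simp), ← hc]
  have hXc : PowerSeries.derivative ℚ (PowerSeries.X * c) =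
      c + PowerSeries.X * PowerSeries.derivative ℚ c := by
    rw [Derivation.leibniz, PowerSeries.derivative_X]
    simp [smul_eq_mul]; ring
  rw [hXc] at hrel
  subst hd
  simp only [Derivation.leibniz, Derivation.leibniz_pow, map_sub, PowerSeries.derivative_X,
    PowerSeries.derivative_C, smul_eq_mul, nsmul_eq_mul, Nat.cast_ofNat, pow_one,
    Nat.add_sub_cancel]
  have h2 : PowerSeries.C (R := ℚ) (1/2) * 2 = 1 := by
    rw [← map_ofNat (PowerSeries.C (R := ℚ)) 2, ← map_mul]
    norm_num
  linear_combination PowerSeries.X * hrel +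
    (-(PowerSeries.X * c^2) - PowerSeries.X^2 * (PowerSeries.derivative ℚ c) * c) * h2
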